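/- Consider the Galton–Watson tree inference model: the root u has label τ_u ∼ Bernoulli(K/n), and each vertex i with label τ_i has L_i children of label 1 and M_i children of label 0, where L_i ∼ Pois(Kp) if τ_i = 1, L_i ∼ Pois(Kq) if τ_i = 0, and M_i ∼ Pois((n−K)q) for either label, all independent. Let Λ_u^t = log(P(T_u^t | τ_u=1)/P(T_u^t | τ_u=0)) be the log likelihood ratio of the unlabeled observed tree of depth t, and similarly Λ^t_{i→π(i)} for subtrees. Then for t ≥ 0: Λ^{t+1}_u = −K(p−q) + Σ_{ℓ ∈ ∂u} log( (e^{Λ^t_{ℓ→u} − ν}(p/q) + 1)/(e^{Λ^t_{ℓ→u} − ν} + 1) ), where ν = log((n−K)/K), with analogous recursion for Λ^{t+1}_{i→π(i)} and initial condition Λ⁰_{i→π(i)} = 0. -/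

import Mathlib

/-- Rooted (ordered) trees: the observed structure of the Galton–Watson tree
(labels are not observed). -/
inductive PTree : Type
  | node : List PTree → PTree

/-- `lik K n p q t τ T` is the likelihood `P(T_u^t | τ_u = τ)` of observing the
depth-`t` truncation of the tree `T` given that the root has label `τ`, in the
Galton–Watson model where a label-1 vertex has `Pois(Kp)` children of label 1
and a label-0 vertex has `Pois(Kq)` children of label 1, every vertex has
`Pois((n-K)q)` children of label 0, and the children labels are marginalized
out (equivalently, by Poisson splitting, the total number of children is
`Pois(Kp+(n-K)q)` resp. `Pois(nq)` and children are labeled i.i.d.). -/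
noncomputable def lik (K n p q : ℝ) : ℕ → Bool → PTree → ℝ
  | 0, _, _ => 1
  | (t + 1), true, PTree.node cs =>
      Real.exp (-(K * p + (n - K) * q)) / (Nat.factorial cs.length) *
        (cs.map fun c =>
          K * p * lik K n p q t true c + (n - K) * q * lik K n p q t false c).prod
  | (t + 1), false, PTree.node cs =>
      Real.exp (-(n * q)) / (Nat.factorial cs.length) *
        (cs.map fun c =>
          K * q * lik K n p q t true c + (n - K) * q * lik K n p q t false c).prod

/-- The log likelihood ratio `Λ^t` for the root label given the depth-`t`
observed tree. -/
noncomputable def LLR (K n p q : ℝ) (t : ℕ) (T : PTree) : ℝ :=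
  Real.log (lik K n p q t true T / lik K n p q t false T)

lemma list_log_prod (l : List ℝ) (h : ∀ x ∈ l, 0 < x) :
    Real.log l.prod = (l.map Real.log).sum := by
  induction l with
  | nil => simp
  | cons a t ih =>
    simp only [List.prod_cons, List.map_cons, List.sum_cons]
    rw [Real.log_mul (ne_of_gt (h a (by simp)))
      (ne_of_gt (List.prod_pos fun x hx => h x (by simp [hx]))),
      ih fun x hx => h x (by simp [hx])]

lemma lik_pos (K n p q : ℝ) (h0q : 0 < q) (hqp : q ≤ p)
    (hK : 1 ≤ K) (hKn : K < n) : ∀ t τ T, 0 < lik K n p q t τ T := by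
  have hK0 : (0:ℝ) < K := lt_of_lt_of_le one_pos hK
  have hnK : (0:ℝ) < n - K := sub_pos.2 hKn
  have hp0 : (0:ℝ) < p := lt_of_lt_of_le h0q hqp
  intro t
  induction t with
  | zero => intro τ T; simp [lik]
  | succ t ih =>
    intro τ T
    cases T with
    | node cs =>
      have hfac : (0:ℝ) < (Nat.factorial cs.length : ℝ) := by
        exact_mod_cast Nat.factorial_pos _
      cases τ <;> simp only [lik] <;>
      refine mul_pos (div_pos (Real.exp_pos _) hfac) (List.prod_pos ?_) <;>
      · intro x hx
        rw [List.mem_map] at hx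
        obtain ⟨c, _, rfl⟩ := hx
        have h1 := ih true c
        have h2 := ih false c
        positivity

/-- Belief propagation computes the log likelihood ratio exactly on the
Galton–Watson tree: the recursion for `Λ^{t+1}` in terms of the children's
`Λ^t`, together with the initial condition `Λ⁰ = 0`. -/
theorem stmt_16 (K n p q : ℝ) (h0q : 0 < q) (hqp : q ≤ p) (hp1 : p ≤ 1)
    (hK : 1 ≤ K) (hKn : K < n) (ν : ℝ) (hν : ν = Real.log ((n - K) / K)) :
    (∀ (t : ℕ) (cs : List PTree),
      LLR K n p q (t + 1) (PTree.node cs)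
        = -(K * (p - q)) +
          (cs.map fun c =>
            Real.log ((Real.exp (LLR K n p q t c - ν) * (p / q) + 1)
              / (Real.exp (LLR K n p q t c - ν) + 1))).sum) ∧
    (∀ T : PTree, LLR K n p q 0 T = 0) := by
  have hK0 : (0:ℝ) < K := lt_of_lt_of_le one_pos hK
  have hnK : (0:ℝ) < n - K := sub_pos.2 hKn
  have hp0 : (0:ℝ) < p := lt_of_lt_of_le h0q hqp
  have hpos := lik_pos K n p q h0q hqp hK hKn
  constructor
  · intro t cs
    set f : PTree → ℝ := fun c =>
      K * p * lik K n p q t true c + (n - K) * q * lik K n p q t false c with hfdef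
    set g : PTree → ℝ := fun c =>
      K * q * lik K n p q t true c + (n - K) * q * lik K n p q t false c with hgdef
    have hf : ∀ c, 0 < f c := fun c => by
      have h1 := hpos t true c; have h2 := hpos t false c
      have : 0 < K * p * lik K n p q t true c := by positivity
      have : 0 < (n - K) * q * lik K n p q t false c := by positivity
      rw [hfdef]; dsimp only; linarith
    have hg : ∀ c, 0 < g c := fun c => by
      have h1 := hpos t true c; have h2 := hpos t false c
      have : 0 < K * q * lik K n p q t true c := by positivity
      have : 0 < (n - K) * q * lik K n p q t false c := by positivity
      rw [hgdef]; dsimp only; linarith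
    have hprodratio : (cs.map fun c => f c / g c).prod
        = (cs.map f).prod / (cs.map g).prod := by
      induction cs with
      | nil => simp
      | cons a l ih => simp [ih, div_mul_div_comm]
    have hPf : 0 < (cs.map f).prod := by
      apply List.prod_pos; intro x hx
      rw [List.mem_map] at hx; obtain ⟨c, _, rfl⟩ := hx; exact hf c
    have hPg : 0 < (cs.map g).prod := by
      apply List.prod_pos; intro x hx
      rw [List.mem_map] at hx; obtain ⟨c, _, rfl⟩ := hx; exact hg c
    have hfac : (0:ℝ) < (Nat.factorial cs.length : ℝ) := by
      exact_mod_cast Nat.factorial_pos _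
    have key : lik K n p q (t+1) true (PTree.node cs) /
        lik K n p q (t+1) false (PTree.node cs)
        = Real.exp (-(K*(p-q))) * (cs.map fun c => f c / g c).prod := by
      show (Real.exp (-(K * p + (n - K) * q)) / (Nat.factorial cs.length) *
        (cs.map f).prod) / (Real.exp (-(n * q)) / (Nat.factorial cs.length) *
        (cs.map g).prod) = _
      rw [hprodratio,
        show Real.exp (-(K*(p-q))) = Real.exp (-(K * p + (n - K) * q)) /
          Real.exp (-(n * q)) by rw [← Real.exp_sub]; ring_nf]
      field_simp
    have hR : 0 < (cs.map fun c => f c / g c).prod := by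
      rw [hprodratio]; exact div_pos hPf hPg
    rw [LLR, key, Real.log_mul (Real.exp_ne_zero _) (ne_of_gt hR), Real.log_exp]
    congr 1
    rw [list_log_prod _ (by
      intro x hx; rw [List.mem_map] at hx; obtain ⟨c, _, rfl⟩ := hx
      exact div_pos (hf c) (hg c)), List.map_map]
    congr 1
    apply List.map_congr_left
    intro c _
    have hA := hpos t true c
    have hB := hpos t false c
    have hLLR : Real.exp (LLR K n p q t c - ν)
        = (lik K n p q t true c / lik K n p q t false c) * (K / (n - K)) := by
      rw [LLR, hν, Real.exp_sub, Real.exp_log (div_pos hA hB),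
        Real.exp_log (div_pos hnK hK0)]
      rw [div_div_div_eq]
      rw [div_mul_div_comm]
    rw [Function.comp_apply, hLLR]
    congr 1
    rw [hfdef, hgdef]
    dsimp only
    field_simp
  · intro T
    simp [LLR, lik]
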